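/- Let a random hash function h be a uniformly random permutation of a finite universe U, and for a nonempty finite set A ⊆ U define minh(A) as the element of A minimizing h. Then for nonempty finite sets A, B ⊆ U, the probability that minh(A) = minh(B) equals the Jaccard similarity |A ∩ B| / |A ∪ B|. -/
import Mathlib

open Finset

section aux
variable {α : Type*} [Fintype α] [DecidableEq α]

lemma minhash_aux_min_eq_iff (A B : Finset α) (hA : A.Nonempty) (hB : B.Nonempty)
    (h : α ≃ Fin (Fintype.card α)) :
    ((A.image h).min' (hA.image h) = (B.image h).min' (hB.image h)) ↔
    ∃ x ∈ A ∩ B, h x = ((A ∪ B).image h).min'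
      ((hA.mono subset_union_left).image h) := by
  have hS : (A ∪ B).Nonempty := hA.mono subset_union_left
  constructor
  · intro heq
    obtain ⟨a, ha, hha⟩ := mem_image.mp ((A.image h).min'_mem (hA.image h))
    obtain ⟨b, hb, hhb⟩ := mem_image.mp ((B.image h).min'_mem (hB.image h))
    have hab : a = b := h.injective (by rw [hha, hhb, heq])
    refine ⟨a, mem_inter.mpr ⟨ha, hab ▸ hb⟩, ?_⟩
    apply le_antisymm
    · -- h a ≤ min' of union: every element of union image is ≥ h a
      obtain ⟨c, hc, hhc⟩ := mem_image.mp (((A ∪ B).image h).min'_mem (hS.image h))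
      rw [← hhc]
      rcases mem_union.mp hc with hcA | hcB
      · rw [hha]; exact min'_le _ _ (mem_image_of_mem _ hcA)
      · rw [hha, heq]; exact min'_le _ _ (mem_image_of_mem _ hcB)
    · exact min'_le _ _ (mem_image_of_mem _ (mem_union_left _ ha))
  · rintro ⟨x, hx, hhx⟩
    obtain ⟨hxA, hxB⟩ := mem_inter.mp hx
    have h1 : (A.image h).min' (hA.image h) = h x := by
      apply le_antisymm (min'_le _ _ (mem_image_of_mem _ hxA))
      exact hhx.trans_le (min'_le _ _
        (image_subset_image subset_union_left ((A.image h).min'_mem _)))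
    have h2 : (B.image h).min' (hB.image h) = h x := by
      apply le_antisymm (min'_le _ _ (mem_image_of_mem _ hxB))
      exact hhx.trans_le (min'_le _ _
        (image_subset_image subset_union_right ((B.image h).min'_mem _)))
    rw [h1, h2]

lemma minhash_aux_image_swap (S : Finset α) {x y : α} (hx : x ∈ S) (hy : y ∈ S) :
    S.image (Equiv.swap x y) = S := by
  apply eq_of_subset_of_card_le
  · intro a ha
    obtain ⟨b, hb, rfl⟩ := mem_image.mp ha
    rcases eq_or_ne b x with rfl | hbx
    · rwa [Equiv.swap_apply_left]
    rcases eq_or_ne b y with rfl | hby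
    · rwa [Equiv.swap_apply_right]
    · rwa [Equiv.swap_apply_of_ne_of_ne hbx hby]
  · rw [card_image_of_injective _ (Equiv.injective _)]

lemma minhash_aux_count_eq (S : Finset α) (hS : S.Nonempty) {x y : α}
    (hx : x ∈ S) (hy : y ∈ S) :
    (univ.filter (fun h : α ≃ Fin (Fintype.card α) =>
        h x = (S.image h).min' (hS.image h))).card
  = (univ.filter (fun h : α ≃ Fin (Fintype.card α) =>
        h y = (S.image h).min' (hS.image h))).card := by
  have key : ∀ h : α ≃ Fin (Fintype.card α),
      S.image ⇑((Equiv.swap x y).trans h) = S.image ⇑h := by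
    intro h
    have : ⇑((Equiv.swap x y).trans h) = ⇑h ∘ ⇑(Equiv.swap x y) := rfl
    rw [this, ← image_image, minhash_aux_image_swap S hx hy]
  apply Finset.card_bij (fun h _ => (Equiv.swap x y).trans h)
  · intro h hh
    simp only [mem_filter, mem_univ, true_and] at hh ⊢
    simp only [key, Equiv.trans_apply, Equiv.swap_apply_right]
    exact hh
  · intro h₁ _ h₂ _ heq
    ext a
    have := DFunLike.congr_fun heq (Equiv.swap x y a)
    simp only [Equiv.trans_apply, Equiv.swap_apply_self] at this
    exact congrArg Fin.val this
  · intro h hh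
    refine ⟨(Equiv.swap x y).trans h, ?_, by ext a; simp [Equiv.swap_apply_self]⟩
    simp only [mem_filter, mem_univ, true_and] at hh ⊢
    simp only [key, Equiv.trans_apply, Equiv.swap_apply_left]
    exact hh

lemma minhash_aux_disjoint (S : Finset α) (hS : S.Nonempty) {x y : α} (hxy : x ≠ y) :
    Disjoint (univ.filter (fun h : α ≃ Fin (Fintype.card α) =>
        h x = (S.image h).min' (hS.image h)))
      (univ.filter (fun h => h y = (S.image h).min' (hS.image h))) := by
  rw [Finset.disjoint_left]
  intro h hhx hhy
  simp only [mem_filter, mem_univ, true_and] at hhx hhy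
  exact hxy (h.injective (hhx.trans hhy.symm))

lemma minhash_aux_total (S : Finset α) (hS : S.Nonempty) {x₀ : α} (hx₀ : x₀ ∈ S) :
    Fintype.card (α ≃ Fin (Fintype.card α)) =
      S.card * (univ.filter (fun h : α ≃ Fin (Fintype.card α) =>
        h x₀ = (S.image h).min' (hS.image h))).card := by
  have hcover : (univ : Finset (α ≃ Fin (Fintype.card α))) =
      S.biUnion (fun x => univ.filter (fun h : α ≃ Fin (Fintype.card α) =>
        h x = (S.image h).min' (hS.image h))) := by
    ext h
    simp only [mem_univ, mem_biUnion, mem_filter, true_and, true_iff]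
    obtain ⟨c, hc, hhc⟩ := mem_image.mp ((S.image h).min'_mem (hS.image h))
    exact ⟨c, hc, hhc⟩
  conv_lhs => rw [← Finset.card_univ, hcover]
  rw [Finset.card_biUnion (fun x _ y _ hxy => minhash_aux_disjoint S hS hxy),
    Finset.sum_congr rfl (fun x hx => minhash_aux_count_eq S hS hx hx₀),
    Finset.sum_const, smul_eq_mul]

end aux

/-- MinHash: for a uniformly random bijection `h : U ≃ Fin |U|` of a finite
universe, and nonempty finite sets `A, B ⊆ U`, the probability that the
`h`-minimal element of `A` coincides with the `h`-minimal element of `B` equals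
the Jaccard similarity `|A ∩ B| / |A ∪ B|`. -/
theorem minhash_collision_eq_jaccard {α : Type*} [Fintype α] [DecidableEq α]
    (A B : Finset α) (hA : A.Nonempty) (hB : B.Nonempty) :
    ((Finset.univ.filter (fun h : α ≃ Fin (Fintype.card α) =>
        (A.image h).min' (hA.image h) = (B.image h).min' (hB.image h))).card : ℝ) /
      (Fintype.card (α ≃ Fin (Fintype.card α)) : ℝ)
    = ((A ∩ B).card : ℝ) / ((A ∪ B).card : ℝ) := by
  classical
  have hS : (A ∪ B).Nonempty := hA.mono subset_union_left
  have hevent : (Finset.univ.filter (fun h : α ≃ Fin (Fintype.card α) =>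
        (A.image h).min' (hA.image h) = (B.image h).min' (hB.image h)))
      = (A ∩ B).biUnion (fun x => univ.filter
          (fun h : α ≃ Fin (Fintype.card α) =>
            h x = ((A ∪ B).image h).min' (hS.image h))) := by
    ext h
    simp only [mem_filter, mem_univ, true_and, mem_biUnion]
    rw [minhash_aux_min_eq_iff A B hA hB h]
  rcases (A ∩ B).eq_empty_or_nonempty with hAB | ⟨x₀, hx₀⟩
  · rw [hevent, hAB]
    simp
  · have hx₀S : x₀ ∈ A ∪ B := mem_union_left _ (mem_inter.mp hx₀).1
    have hsub : A ∩ B ⊆ A ∪ B := inter_subset_left.trans subset_union_left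
    have hcard : (Finset.univ.filter (fun h : α ≃ Fin (Fintype.card α) =>
        (A.image h).min' (hA.image h) = (B.image h).min' (hB.image h))).card
        = (A ∩ B).card * (univ.filter (fun h : α ≃ Fin (Fintype.card α) =>
            h x₀ = ((A ∪ B).image h).min' (hS.image h))).card := by
      rw [hevent, Finset.card_biUnion (fun x _ y _ hxy =>
        minhash_aux_disjoint (A ∪ B) hS hxy),
        Finset.sum_congr rfl (fun x hx =>
          minhash_aux_count_eq (A ∪ B) hS (hsub hx) hx₀S),
        Finset.sum_const, smul_eq_mul]
    have htotal := minhash_aux_total (A ∪ B) hS hx₀S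
    have hNpos : 0 < (univ.filter (fun h : α ≃ Fin (Fintype.card α) =>
        h x₀ = ((A ∪ B).image h).min' (hS.image h))).card := by
      have hpos : 0 < Fintype.card (α ≃ Fin (Fintype.card α)) :=
        Fintype.card_pos_iff.mpr ⟨Fintype.equivFin α⟩
      rw [htotal] at hpos
      exact Nat.pos_of_ne_zero (fun h0 => by simp [h0] at hpos)
    rw [hcard, htotal]
    push_cast
    rw [mul_div_mul_comm]
    have hN : ((univ.filter (fun h : α ≃ Fin (Fintype.card α) =>
        h x₀ = ((A ∪ B).image h).min' (hS.image h))).card : ℝ) ≠ 0 := by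
      exact_mod_cast hNpos.ne'
    rw [div_self hN, mul_one]
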